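/- Fix d ≥ 1, a symmetric positive definite d×d real matrix C, a vector a ∈ ℝ^d, and reals σ_U > 0, σ̃_V > 0, g > 0, m ∈ ℝ. For ρ ∈ ℝ^d with ρᵀC⁻¹ρ < 1 define σ̃_U(ρ) = σ_U g √(1 − ρᵀC⁻¹ρ), ζ(ρ) = g σ_U ρᵀC⁻¹a, σ(ρ) = √(σ̃_V² + σ̃_U(ρ)²), λ(ρ) = σ̃_U(ρ)/σ̃_V, ξ(ρ) = ζ(ρ)/(λ(ρ)σ(ρ)), and for ε ∈ ℝ with ω = ε − m, f(ε; ρ) = (1/σ(ρ))[Φ(ξ(ρ) − λ(ρ)ω/σ(ρ)) φ((ω + ζ(ρ))/σ(ρ)) + Φ(−ξ(ρ) − λ(ρ)ω/σ(ρ)) φ((ω − ζ(ρ))/σ(ρ))]. Then for every ε ∈ ℝ, the map ρ ↦ log f(ε; ρ) is differentiable at ρ = 0 and its gradient at ρ = 0 is the zero vector of ℝ^d. That is, the score of the log-likelihood with respect to the dependence parameter ρ_U vanishes identically at ρ_U = 0, so the model is not first-order identified there. -/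
import Mathlib


open Matrix MeasureTheory

/-- The standard normal density. -/
noncomputable def stdNormalPDF (x : ℝ) : ℝ :=
  (Real.sqrt (2 * Real.pi))⁻¹ * Real.exp (-x ^ 2 / 2)

/-- The standard normal cumulative distribution function. -/
noncomputable def stdNormalCDF (x : ℝ) : ℝ :=
  ∫ t in Set.Iio x, stdNormalPDF t

/-- The closed-form conditional density of the composite error term given the control
functions in the normal–folded-normal stochastic frontier model, viewed as a function of
the dependence-parameter vector `ρ`. -/
noncomputable def densF (d : ℕ) (C : Matrix (Fin d) (Fin d) ℝ) (a : Fin d → ℝ)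
    (σU σV g m : ℝ) (ρ : Fin d → ℝ) (ε : ℝ) : ℝ :=
  let sU : ℝ := σU * g * Real.sqrt (1 - ρ ⬝ᵥ (C⁻¹ *ᵥ ρ))
  let ζ : ℝ := g * σU * (ρ ⬝ᵥ (C⁻¹ *ᵥ a))
  let σ : ℝ := Real.sqrt (σV ^ 2 + sU ^ 2)
  let lam : ℝ := sU / σV
  let ξ : ℝ := ζ / (lam * σ)
  let ω : ℝ := ε - m
  (1 / σ) * (stdNormalCDF (ξ - lam * ω / σ) * stdNormalPDF ((ω + ζ) / σ) +
    stdNormalCDF (-ξ - lam * ω / σ) * stdNormalPDF ((ω - ζ) / σ))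

/- ### Auxiliary lemmas -/

lemma stdNormalPDF_pos (x : ℝ) : 0 < stdNormalPDF x := by
  unfold stdNormalPDF
  positivity

lemma continuous_stdNormalPDF : Continuous stdNormalPDF := by
  unfold stdNormalPDF; fun_prop

lemma differentiable_stdNormalPDF : Differentiable ℝ stdNormalPDF := by
  unfold stdNormalPDF; fun_prop

lemma integrable_stdNormalPDF : Integrable stdNormalPDF := by
  have h : Integrable (fun x : ℝ => Real.exp (-(1/2) * x ^ 2)) :=
    integrable_exp_neg_mul_sq (by norm_num)
  have := h.const_mul (Real.sqrt (2 * Real.pi))⁻¹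
  refine this.congr ?_
  filter_upwards with x
  unfold stdNormalPDF
  ring_nf

lemma hasDerivAt_stdNormalCDF (x : ℝ) : HasDerivAt stdNormalCDF (stdNormalPDF x) x := by
  have hInt : ∀ y : ℝ, IntervalIntegrable stdNormalPDF volume 0 y :=
    fun y => integrable_stdNormalPDF.intervalIntegrable
  have key : ∀ y : ℝ, stdNormalCDF y = stdNormalCDF 0 + ∫ t in (0:ℝ)..y, stdNormalPDF t := by
    intro y
    have h1 : (∫ t in Set.Iic y, stdNormalPDF t) - ∫ t in Set.Iic (0:ℝ), stdNormalPDF t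
        = ∫ t in (0:ℝ)..y, stdNormalPDF t :=
      intervalIntegral.integral_Iic_sub_Iic integrable_stdNormalPDF.integrableOn
        integrable_stdNormalPDF.integrableOn
    unfold stdNormalCDF
    rw [← integral_Iic_eq_integral_Iio, ← integral_Iic_eq_integral_Iio]
    linarith
  have hd : HasDerivAt (fun y => stdNormalCDF 0 + ∫ t in (0:ℝ)..y, stdNormalPDF t)
      (stdNormalPDF x) x := by
    exact (intervalIntegral.integral_hasDerivAt_right (hInt x)
      (continuous_stdNormalPDF.stronglyMeasurableAtFilter _ _)
      continuous_stdNormalPDF.continuousAt).const_add _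
  exact hd.congr_of_eventuallyEq (by filter_upwards with y; rw [key y])

lemma stdNormalCDF_pos (x : ℝ) : 0 < stdNormalCDF x := by
  unfold stdNormalCDF
  rw [setIntegral_pos_iff_support_of_nonneg_ae]
  · have : Function.support stdNormalPDF = Set.univ := by
      ext t; simp [Function.mem_support, (stdNormalPDF_pos t).ne']
    rw [this, Set.univ_inter]
    simp [Real.volume_Iio]
  · filter_upwards with t using (stdNormalPDF_pos t).le
  · exact integrable_stdNormalPDF.integrableOn

lemma densF_eq (d : ℕ) (C : Matrix (Fin d) (Fin d) ℝ) (a : Fin d → ℝ)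
    (σU σV g m : ℝ) (ρ : Fin d → ℝ) (ε : ℝ) :
    densF d C a σU σV g m ρ ε =
    (1 / Real.sqrt (σV ^ 2 + (σU * g * Real.sqrt (1 - ρ ⬝ᵥ (C⁻¹ *ᵥ ρ))) ^ 2)) *
    (stdNormalCDF ((g * σU * (ρ ⬝ᵥ (C⁻¹ *ᵥ a))) /
        ((σU * g * Real.sqrt (1 - ρ ⬝ᵥ (C⁻¹ *ᵥ ρ)) / σV) *
          Real.sqrt (σV ^ 2 + (σU * g * Real.sqrt (1 - ρ ⬝ᵥ (C⁻¹ *ᵥ ρ))) ^ 2)) -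
        (σU * g * Real.sqrt (1 - ρ ⬝ᵥ (C⁻¹ *ᵥ ρ)) / σV) * (ε - m) /
          Real.sqrt (σV ^ 2 + (σU * g * Real.sqrt (1 - ρ ⬝ᵥ (C⁻¹ *ᵥ ρ))) ^ 2)) *
      stdNormalPDF (((ε - m) + g * σU * (ρ ⬝ᵥ (C⁻¹ *ᵥ a))) /
          Real.sqrt (σV ^ 2 + (σU * g * Real.sqrt (1 - ρ ⬝ᵥ (C⁻¹ *ᵥ ρ))) ^ 2)) +
      stdNormalCDF (-((g * σU * (ρ ⬝ᵥ (C⁻¹ *ᵥ a))) /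
        ((σU * g * Real.sqrt (1 - ρ ⬝ᵥ (C⁻¹ *ᵥ ρ)) / σV) *
          Real.sqrt (σV ^ 2 + (σU * g * Real.sqrt (1 - ρ ⬝ᵥ (C⁻¹ *ᵥ ρ))) ^ 2))) -
        (σU * g * Real.sqrt (1 - ρ ⬝ᵥ (C⁻¹ *ᵥ ρ)) / σV) * (ε - m) /
          Real.sqrt (σV ^ 2 + (σU * g * Real.sqrt (1 - ρ ⬝ᵥ (C⁻¹ *ᵥ ρ))) ^ 2)) *
      stdNormalPDF (((ε - m) - g * σU * (ρ ⬝ᵥ (C⁻¹ *ᵥ a))) /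
          Real.sqrt (σV ^ 2 + (σU * g * Real.sqrt (1 - ρ ⬝ᵥ (C⁻¹ *ᵥ ρ))) ^ 2))) := by
  simp only [densF]

/-- `densF` is an even function of `ρ`. -/
lemma densF_neg (d : ℕ) (C : Matrix (Fin d) (Fin d) ℝ) (a : Fin d → ℝ)
    (σU σV g m : ℝ) (ρ : Fin d → ℝ) (ε : ℝ) :
    densF d C a σU σV g m (-ρ) ε = densF d C a σU σV g m ρ ε := by
  rw [densF_eq, densF_eq]
  simp only [Matrix.mulVec_neg, neg_dotProduct, dotProduct_neg, neg_neg,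
    mul_neg, neg_div, neg_neg, neg_add_eq_sub]
  ring_nf

lemma densF_pos (d : ℕ) (C : Matrix (Fin d) (Fin d) ℝ) (a : Fin d → ℝ)
    (σU σV g m : ℝ) (hσV : 0 < σV) (ρ : Fin d → ℝ) (ε : ℝ) :
    0 < densF d C a σU σV g m ρ ε := by
  rw [densF_eq]
  have h0 : (0:ℝ) < σV ^ 2 + (σU * g * Real.sqrt (1 - ρ ⬝ᵥ (C⁻¹ *ᵥ ρ))) ^ 2 :=
    add_pos_of_pos_of_nonneg (pow_pos hσV 2) (sq_nonneg _)
  have hσ : 0 < Real.sqrt (σV ^ 2 + (σU * g * Real.sqrt (1 - ρ ⬝ᵥ (C⁻¹ *ᵥ ρ))) ^ 2) :=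
    Real.sqrt_pos.2 h0
  exact mul_pos (by positivity)
    (add_pos (mul_pos (stdNormalCDF_pos _) (stdNormalPDF_pos _))
      (mul_pos (stdNormalCDF_pos _) (stdNormalPDF_pos _)))

lemma diff_cdf {E : Type*} [NormedAddCommGroup E] [NormedSpace ℝ E]
    {f : E → ℝ} {x : E} (hf : DifferentiableAt ℝ f x) :
    DifferentiableAt ℝ (fun y => stdNormalCDF (f y)) x :=
  (hasDerivAt_stdNormalCDF (f x)).differentiableAt.comp x hf

lemma diff_pdf {E : Type*} [NormedAddCommGroup E] [NormedSpace ℝ E]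
    {f : E → ℝ} {x : E} (hf : DifferentiableAt ℝ f x) :
    DifferentiableAt ℝ (fun y => stdNormalPDF (f y)) x :=
  (differentiable_stdNormalPDF (f x)).comp x hf

lemma diffAt_div {E : Type*} [NormedAddCommGroup E] [NormedSpace ℝ E]
    {f g : E → ℝ} {x : E} (hf : DifferentiableAt ℝ f x) (hg : DifferentiableAt ℝ g x)
    (hx : g x ≠ 0) : DifferentiableAt ℝ (fun y => f y / g y) x := by
  simp only [div_eq_mul_inv]
  exact hf.mul (hg.inv hx)

lemma densF_diffAt (d : ℕ) (C : Matrix (Fin d) (Fin d) ℝ) (a : Fin d → ℝ)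
    (σU σV g m : ℝ) (hσU : 0 < σU) (hσV : 0 < σV) (hg : 0 < g) (ε : ℝ) :
    DifferentiableAt ℝ (fun ρ : Fin d → ℝ => densF d C a σU σV g m ρ ε) 0 := by
  have hrw : (fun ρ : Fin d → ℝ => densF d C a σU σV g m ρ ε)
      = fun ρ : Fin d → ℝ =>
    (1 / Real.sqrt (σV ^ 2 + (σU * g * Real.sqrt (1 - ρ ⬝ᵥ (C⁻¹ *ᵥ ρ))) ^ 2)) *
    (stdNormalCDF ((g * σU * (ρ ⬝ᵥ (C⁻¹ *ᵥ a))) /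
        ((σU * g * Real.sqrt (1 - ρ ⬝ᵥ (C⁻¹ *ᵥ ρ)) / σV) *
          Real.sqrt (σV ^ 2 + (σU * g * Real.sqrt (1 - ρ ⬝ᵥ (C⁻¹ *ᵥ ρ))) ^ 2)) -
        (σU * g * Real.sqrt (1 - ρ ⬝ᵥ (C⁻¹ *ᵥ ρ)) / σV) * (ε - m) /
          Real.sqrt (σV ^ 2 + (σU * g * Real.sqrt (1 - ρ ⬝ᵥ (C⁻¹ *ᵥ ρ))) ^ 2)) *
      stdNormalPDF (((ε - m) + g * σU * (ρ ⬝ᵥ (C⁻¹ *ᵥ a))) /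
          Real.sqrt (σV ^ 2 + (σU * g * Real.sqrt (1 - ρ ⬝ᵥ (C⁻¹ *ᵥ ρ))) ^ 2)) +
      stdNormalCDF (-((g * σU * (ρ ⬝ᵥ (C⁻¹ *ᵥ a))) /
        ((σU * g * Real.sqrt (1 - ρ ⬝ᵥ (C⁻¹ *ᵥ ρ)) / σV) *
          Real.sqrt (σV ^ 2 + (σU * g * Real.sqrt (1 - ρ ⬝ᵥ (C⁻¹ *ᵥ ρ))) ^ 2))) -
        (σU * g * Real.sqrt (1 - ρ ⬝ᵥ (C⁻¹ *ᵥ ρ)) / σV) * (ε - m) /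
          Real.sqrt (σV ^ 2 + (σU * g * Real.sqrt (1 - ρ ⬝ᵥ (C⁻¹ *ᵥ ρ))) ^ 2)) *
      stdNormalPDF (((ε - m) - g * σU * (ρ ⬝ᵥ (C⁻¹ *ᵥ a))) /
          Real.sqrt (σV ^ 2 + (σU * g * Real.sqrt (1 - ρ ⬝ᵥ (C⁻¹ *ᵥ ρ))) ^ 2))) :=
    funext fun ρ => densF_eq d C a σU σV g m ρ ε
  rw [hrw]
  -- basic differentiability facts
  have hq : DifferentiableAt ℝ (fun ρ : Fin d → ℝ => ρ ⬝ᵥ (C⁻¹ *ᵥ ρ)) 0 := by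
    have : Differentiable ℝ (fun ρ : Fin d → ℝ => ρ ⬝ᵥ (C⁻¹ *ᵥ ρ)) := by
      simp only [dotProduct, mulVec]
      fun_prop
    exact this 0
  have hz : DifferentiableAt ℝ (fun ρ : Fin d → ℝ => ρ ⬝ᵥ (C⁻¹ *ᵥ a)) 0 := by
    have : Differentiable ℝ (fun ρ : Fin d → ℝ => ρ ⬝ᵥ (C⁻¹ *ᵥ a)) := by
      simp only [dotProduct, mulVec]
      fun_prop
    exact this 0
  have hq0 : ((0 : Fin d → ℝ) ⬝ᵥ (C⁻¹ *ᵥ (0 : Fin d → ℝ))) = 0 := by simp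
  -- sqrt(1 - q)
  have h1 : DifferentiableAt ℝ
      (fun ρ : Fin d → ℝ => Real.sqrt (1 - ρ ⬝ᵥ (C⁻¹ *ᵥ ρ))) 0 :=
    DifferentiableAt.sqrt ((differentiableAt_const 1).sub hq) (by rw [hq0]; norm_num)
  have e1 : Real.sqrt (1 - (0 : Fin d → ℝ) ⬝ᵥ (C⁻¹ *ᵥ (0 : Fin d → ℝ))) = 1 := by
    rw [hq0]; simp
  -- sU
  have hsU : DifferentiableAt ℝ
      (fun ρ : Fin d → ℝ => σU * g * Real.sqrt (1 - ρ ⬝ᵥ (C⁻¹ *ᵥ ρ))) 0 :=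
    (differentiableAt_const (σU * g)).mul h1
  -- σ
  have hσarg0 : (0:ℝ) < σV ^ 2
      + (σU * g * Real.sqrt (1 - (0:Fin d → ℝ) ⬝ᵥ (C⁻¹ *ᵥ (0:Fin d → ℝ)))) ^ 2 :=
    add_pos_of_pos_of_nonneg (pow_pos hσV 2) (sq_nonneg _)
  have hσd : DifferentiableAt ℝ (fun ρ : Fin d → ℝ =>
      Real.sqrt (σV ^ 2 + (σU * g * Real.sqrt (1 - ρ ⬝ᵥ (C⁻¹ *ᵥ ρ))) ^ 2)) 0 :=
    DifferentiableAt.sqrt ((differentiableAt_const (σV ^ 2)).add (hsU.pow 2)) hσarg0.ne'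
  have hσ0 : (0:ℝ) < Real.sqrt (σV ^ 2
      + (σU * g * Real.sqrt (1 - (0:Fin d → ℝ) ⬝ᵥ (C⁻¹ *ᵥ (0:Fin d → ℝ)))) ^ 2) :=
    Real.sqrt_pos.2 hσarg0
  -- lam
  have hlam : DifferentiableAt ℝ (fun ρ : Fin d → ℝ =>
      σU * g * Real.sqrt (1 - ρ ⬝ᵥ (C⁻¹ *ᵥ ρ)) / σV) 0 :=
    diffAt_div hsU (differentiableAt_const σV) hσV.ne'
  have hlam0 : (0:ℝ) < σU * g * Real.sqrt (1 - (0:Fin d → ℝ) ⬝ᵥ (C⁻¹ *ᵥ (0:Fin d → ℝ))) / σV := by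
    rw [e1]
    positivity
  -- ζ
  have hζ : DifferentiableAt ℝ (fun ρ : Fin d → ℝ => g * σU * (ρ ⬝ᵥ (C⁻¹ *ᵥ a))) 0 :=
    (differentiableAt_const (g * σU)).mul hz
  -- ξ
  have hξ : DifferentiableAt ℝ (fun ρ : Fin d → ℝ =>
      (g * σU * (ρ ⬝ᵥ (C⁻¹ *ᵥ a))) /
        ((σU * g * Real.sqrt (1 - ρ ⬝ᵥ (C⁻¹ *ᵥ ρ)) / σV) *
          Real.sqrt (σV ^ 2 + (σU * g * Real.sqrt (1 - ρ ⬝ᵥ (C⁻¹ *ᵥ ρ))) ^ 2))) 0 :=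
    diffAt_div hζ (hlam.mul hσd) (mul_pos hlam0 hσ0).ne'
  -- lam * ω / σ
  have hlo : DifferentiableAt ℝ (fun ρ : Fin d → ℝ =>
      (σU * g * Real.sqrt (1 - ρ ⬝ᵥ (C⁻¹ *ᵥ ρ)) / σV) * (ε - m) /
        Real.sqrt (σV ^ 2 + (σU * g * Real.sqrt (1 - ρ ⬝ᵥ (C⁻¹ *ᵥ ρ))) ^ 2)) 0 :=
    diffAt_div (hlam.mul_const (ε - m)) hσd hσ0.ne'
  -- the two pdf arguments
  have hb1 : DifferentiableAt ℝ (fun ρ : Fin d → ℝ =>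
      ((ε - m) + g * σU * (ρ ⬝ᵥ (C⁻¹ *ᵥ a))) /
        Real.sqrt (σV ^ 2 + (σU * g * Real.sqrt (1 - ρ ⬝ᵥ (C⁻¹ *ᵥ ρ))) ^ 2)) 0 :=
    diffAt_div ((differentiableAt_const (ε - m)).add hζ) hσd hσ0.ne'
  have hb2 : DifferentiableAt ℝ (fun ρ : Fin d → ℝ =>
      ((ε - m) - g * σU * (ρ ⬝ᵥ (C⁻¹ *ᵥ a))) /
        Real.sqrt (σV ^ 2 + (σU * g * Real.sqrt (1 - ρ ⬝ᵥ (C⁻¹ *ᵥ ρ))) ^ 2)) 0 :=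
    diffAt_div ((differentiableAt_const (ε - m)).sub hζ) hσd hσ0.ne'
  -- assemble
  exact (diffAt_div (differentiableAt_const 1) hσd hσ0.ne').mul
    (((diff_cdf (hξ.sub hlo)).mul (diff_pdf hb1)).add
      ((diff_cdf (hξ.neg.sub hlo)).mul (diff_pdf hb2)))

/-- the score of the log-likelihood with respect to the dependence parameter
`ρ_U` vanishes identically at `ρ_U = 0`: for every `ε` the map `ρ ↦ log f(ε; ρ)` is
differentiable at `ρ = 0` with zero (Fréchet) derivative, i.e. zero gradient. -/
theorem score_vanishes_at_zero
    (d : ℕ) (hd : 1 ≤ d)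
    (C : Matrix (Fin d) (Fin d) ℝ) (hC : C.PosDef)
    (a : Fin d → ℝ) (σU σV g m : ℝ)
    (hσU : 0 < σU) (hσV : 0 < σV) (hg : 0 < g) :
    ∀ ε : ℝ,
      HasFDerivAt (fun ρ : Fin d → ℝ => Real.log (densF d C a σU σV g m ρ ε))
        (0 : (Fin d → ℝ) →L[ℝ] ℝ) 0 := by
  intro ε
  set F : (Fin d → ℝ) → ℝ := fun ρ => Real.log (densF d C a σU σV g m ρ ε) with hFdef
  have hdiff : DifferentiableAt ℝ F 0 :=
    (densF_diffAt d C a σU σV g m hσU hσV hg ε).log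
      (densF_pos d C a σU σV g m hσV 0 ε).ne'
  have heven : ∀ ρ, F (-ρ) = F ρ := fun ρ => by
    rw [hFdef]
    simp only [densF_neg]
  set L : (Fin d → ℝ) →L[ℝ] ℝ := fderiv ℝ F 0 with hL
  have h1 : HasFDerivAt F L 0 := hdiff.hasFDerivAt
  have hneg : HasFDerivAt (fun ρ : Fin d → ℝ => F (-ρ))
      (L.comp (-(ContinuousLinearMap.id ℝ (Fin d → ℝ)))) 0 := by
    have h2 : HasFDerivAt (fun ρ : Fin d → ℝ => -ρ)
        (-(ContinuousLinearMap.id ℝ (Fin d → ℝ))) 0 := (hasFDerivAt_id (0 : Fin d → ℝ)).neg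
    have h1' : HasFDerivAt F L ((fun ρ : Fin d → ℝ => -ρ) 0) := by simpa using h1
    exact h1'.comp 0 h2
  have hFeq : (fun ρ : Fin d → ℝ => F (-ρ)) = F := funext heven
  rw [hFeq] at hneg
  have hLL : L.comp (-(ContinuousLinearMap.id ℝ (Fin d → ℝ))) = L :=
    hneg.unique h1
  have hL0 : L = 0 := by
    ext v
    have := DFunLike.congr_fun hLL v
    simp only [ContinuousLinearMap.comp_apply, ContinuousLinearMap.neg_apply,
      ContinuousLinearMap.id_apply, map_neg] at this
    have : L v = 0 := by linarith
    simpa using this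
  rw [← hL0]
  exact h1
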